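/- Let T be a finite nonabelian simple group and let G be a strictly T-solvable finite group. Assume there exist two primes r,s ∈ π(T) such that r–s ∈ Γ̄(G), i.e., r ≠ s and G has no element of order rs. Then there exist a solvable normal subgroup N of G and a subgroup M of the automorphism group Aut(T) containing the group Inn(T) of inner automorphisms of T such that G/N is isomorphic to M. -/

import Mathlib

/-- `G` has an element of order `n`. -/
def hasElementOfOrder (G : Type*) [Group G] (n : ℕ) : Prop :=
  ∃ g : G, orderOf g = n

/-- The set `π(G)` of primes dividing the order of `G`. -/
def primeSet (G : Type*) [Group G] : Set ℕ :=
  {p | p.Prime ∧ p ∣ Nat.card G}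

/-- The prime graph `Γ(G)` of a finite group `G`, realized as a graph on `ℕ`:
two distinct primes dividing `|G|` are adjacent iff `G` has an element of order `p*q`. -/
def primeGraph (G : Type*) [Group G] : SimpleGraph ℕ where
  Adj p q := p ≠ q ∧ p ∈ primeSet G ∧ q ∈ primeSet G ∧ hasElementOfOrder G (p * q)
  symm := ⟨by rintro p q ⟨h1, h2, h3, h4⟩; exact ⟨h1.symm, h3, h2, by rwa [mul_comm]⟩⟩
  loopless := ⟨by rintro p ⟨h, -⟩; exact h rfl⟩

/-- The prime graph complement `Γ̄(G)`, realized as a graph on `ℕ`: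
two distinct primes dividing `|G|` are adjacent iff `G` has no element of order `p*q`. -/
def primeGraphCompl (G : Type*) [Group G] : SimpleGraph ℕ where
  Adj p q := p ≠ q ∧ p ∈ primeSet G ∧ q ∈ primeSet G ∧ ¬ hasElementOfOrder G (p * q)
  symm := ⟨by rintro p q ⟨h1, h2, h3, h4⟩; exact ⟨h1.symm, h3, h2, by rwa [mul_comm]⟩⟩
  loopless := ⟨by rintro p ⟨h, -⟩; exact h rfl⟩

/-- `Γ` is isomorphic to the prime graph of `G` (with vertex set `π(G)`). -/
def IsPrimeGraphOf {V : Type*} (Γ : SimpleGraph V) (G : Type*) [Group G] : Prop :=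
  Nonempty (Γ ≃g (primeGraph G).induce (primeSet G))

/-- A step `A ⊴ B` of a subnormal series whose factor group `B/A` is cyclic or
isomorphic to `T`. -/
def IsCyclicOrIsoTFactor (T : Type*) [Group T] {G : Type*} [Group G] (A B : Subgroup G) : Prop :=
  ∃ h : (A.subgroupOf B).Normal,
    haveI := h
    IsCyclic (↥B ⧸ A.subgroupOf B) ∨ Nonempty ((↥B ⧸ A.subgroupOf B) ≃* T)

/-- A step `A ⊴ B` of a subnormal series whose factor group `B/A` is isomorphic to `T`. -/
def IsIsoTFactor (T : Type*) [Group T] {G : Type*} [Group G] (A B : Subgroup G) : Prop :=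
  ∃ h : (A.subgroupOf B).Normal,
    haveI := h
    Nonempty ((↥B ⧸ A.subgroupOf B) ≃* T)

/-- `G` is `T`-solvable: `G` has a subnormal series each of whose factor groups is
cyclic or isomorphic to `T`. -/
def IsTSolvable (T : Type*) [Group T] (G : Type*) [Group G] : Prop :=
  ∃ (n : ℕ) (H : Fin (n + 1) → Subgroup G), Monotone H ∧ H 0 = ⊥ ∧ H (Fin.last n) = ⊤ ∧
    ∀ i : Fin n, IsCyclicOrIsoTFactor T (H i.castSucc) (H i.succ)

/-- `G` is strictly `T`-solvable: `G` has a subnormal series each of whose factor groups is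
cyclic or isomorphic to `T`, with at least one factor isomorphic to `T`. -/
def IsStrictlyTSolvable (T : Type*) [Group T] (G : Type*) [Group G] : Prop :=
  ∃ (n : ℕ) (H : Fin (n + 1) → Subgroup G), Monotone H ∧ H 0 = ⊥ ∧ H (Fin.last n) = ⊤ ∧
    (∀ i : Fin n, IsCyclicOrIsoTFactor T (H i.castSucc) (H i.succ)) ∧
    ∃ i : Fin n, IsIsoTFactor T (H i.castSucc) (H i.succ)

/-- `{x,y,z}` forms a triangle in `Γ`. -/
def IsTriangle {V : Type*} (Γ : SimpleGraph V) (x y z : V) : Prop :=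
  Γ.Adj x y ∧ Γ.Adj x z ∧ Γ.Adj y z

/-- A Fermat prime: a prime of the form `2^k + 1` with `k ≥ 1`. -/
def IsFermatPrime (r : ℕ) : Prop := r.Prime ∧ ∃ k : ℕ, 1 ≤ k ∧ r = 2 ^ k + 1

/-- `ρ` is a (nonzero) irreducible representation: the only invariant subspaces are `0` and
everything. -/
def IsIrreducibleRep {k G W : Type*} [CommSemiring k] [Monoid G] [AddCommMonoid W]
    [Module k W] (ρ : Representation k G W) : Prop :=
  (∃ w : W, w ≠ 0) ∧
    ∀ U : Submodule k W, (∀ g : G, ∀ u ∈ U, ρ g u ∈ U) → U = ⊥ ∨ U = ⊤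

/-- In every complex irreducible representation of `T` there is an element of order `r`
with a (nonzero) fixed point. -/
def EveryIrrRepHasOrderFixedPoint (T : Type*) [Group T] (r : ℕ) : Prop :=
  ∀ (W : Type) (_ : AddCommGroup W) (_ : Module ℂ W), FiniteDimensional ℂ W →
    ∀ ρ : Representation ℂ T W, IsIrreducibleRep ρ →
      ∃ t : T, orderOf t = r ∧ ∃ w : W, w ≠ 0 ∧ ρ t w = w

/-- A `p`-group satisfies the Frobenius criterion if it is cyclic, dihedral, Klein four,
or generalized quaternion. -/
def SatisfiesFrobeniusCriterion (P : Type*) [Group P] : Prop :=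
  IsCyclic P ∨ (∃ n : ℕ, Nonempty (P ≃* DihedralGroup n)) ∨
    Nonempty (P ≃* (Multiplicative (ZMod 2) × Multiplicative (ZMod 2))) ∨
    (∃ n : ℕ, Nonempty (P ≃* QuaternionGroup (2 ^ n)))

/-- The prime `r ∈ π(T)` is special relative to `(G, K, N)`: either `r ∤ |N|`, or `r` is odd
and there is `s ∈ π(T)`, `s ≠ r`, such that `G` has no element of order `r*s`. -/
def IsSpecialPrime (T : Type*) [Group T] (G : Type*) [Group G] {K : Type*} [Group K]
    (N : Subgroup K) (r : ℕ) : Prop :=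
  r ∈ primeSet T ∧
    (¬ r ∣ Nat.card ↥N ∨ (Odd r ∧ ∃ s ∈ primeSet T, r ≠ s ∧ ¬ hasElementOfOrder G (r * s)))

/-- `E` is a perfect central extension of `T`: `E` is perfect and there is a central
subgroup (namely the kernel of a surjection onto `T`) with quotient isomorphic to `T`. -/
def IsPerfectCentralExtensionOf (E : Type*) [Group E] (T : Type*) [Group T] : Prop :=
  commutator E = ⊤ ∧
    ∃ π : E →* T, Function.Surjective π ∧ ∀ x ∈ π.ker, ∀ y : E, x * y = y * x

/-- The factor `B/A` (with `A ≤ B ≤ G`) is an elementary abelian `p`-group: it is abelian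
and every element has order dividing `p`. -/
def IsElementaryAbelianFactor {G : Type*} [Group G] (p : ℕ) (A B : Subgroup G) : Prop :=
  (∀ x ∈ B, ∀ y ∈ B, x * y * x⁻¹ * y⁻¹ ∈ A) ∧ (∀ x ∈ B, x ^ p ∈ A)


/-! ### Auxiliary lemmas -/

section Aux

open Function

variable {G : Type*} [Group G]

lemma my_solvable_of_normal_of_quot (N : Subgroup G) [N.Normal]
    (h1 : IsSolvable N) (h2 : IsSolvable (G ⧸ N)) : IsSolvable G := by
  haveI : Group.IsSolvable N := h1; haveI : Group.IsSolvable (G ⧸ N) := h2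
  exact solvable_of_ker_le_range N.subtype (QuotientGroup.mk' N)
    (by rw [QuotientGroup.ker_mk', Subgroup.range_subtype])

lemma my_isSolvable_of_cyclic {G : Type*} [Group G] (h : IsCyclic G) : IsSolvable G := by
  haveI := h
  let _ := IsCyclic.commGroup (α := G)
  exact isSolvable_of_comm fun a b => mul_comm a b

lemma my_solvable_equiv {G H : Type*} [Group G] [Group H] (e : G ≃* H)
    (h : IsSolvable G) : IsSolvable H := by
  haveI : Group.IsSolvable G := h
  exact solvable_of_surjective (f := e.toMonoidHom) e.surjective

lemma my_not_solvable_of_simple_nonabelian {T : Type*} [Group T] [IsSimpleGroup T]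
    (hnab : ∃ a b : T, a * b ≠ b * a) : ¬ IsSolvable T := fun h => by
  obtain ⟨a, b, hab⟩ := hnab
  exact hab (IsSimpleGroup.comm_iff_isSolvable.mpr h a b)

lemma my_hasElementOfOrder_lift {G Q : Type*} [Group G] [Finite G] [Group Q]
    (f : G →* Q) (hf : Function.Surjective f) {m : ℕ}
    (h : hasElementOfOrder Q m) : hasElementOfOrder G m := by
  obtain ⟨q, hq⟩ := h
  obtain ⟨g, rfl⟩ := hf q
  have hdvd : m ∣ orderOf g := hq ▸ orderOf_map_dvd f g
  obtain ⟨k, hk⟩ := hdvd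
  have hg : orderOf g ≠ 0 := (orderOf_pos g).ne'
  have hk0 : k ≠ 0 := by rintro rfl; simp [hk] at hg
  refine ⟨g ^ k, ?_⟩
  rw [orderOf_pow, hk, Nat.gcd_eq_right ⟨m, mul_comm m k ▸ rfl⟩,
    Nat.mul_div_cancel _ (Nat.pos_of_ne_zero hk0)]

lemma my_hasElementOfOrder_subgroup {G : Type*} [Group G] (K : Subgroup G) {m : ℕ}
    (h : hasElementOfOrder K m) : hasElementOfOrder G m := by
  obtain ⟨x, hx⟩ := h
  exact ⟨(x : G), by rw [← hx]; exact orderOf_injective K.subtype K.subtype_injective x⟩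

end Aux

section Factor

open Function

lemma my_factor_transfer {T : Type*} [Group T] [IsSimpleGroup T] {G H : Type*} [Group G] [Group H]
    {A B : Subgroup G} {C : Subgroup H}
    (ψ : ↥B →* H) (hs : Function.Surjective ψ)
    (him : (A.subgroupOf B).map ψ = C)
    (hf : IsCyclicOrIsoTFactor T A B) :
    ∃ _ : C.Normal, (IsCyclic (H ⧸ C) ∨ Nonempty ((H ⧸ C) ≃* T)) := by
  obtain ⟨hn, hq⟩ := hf
  haveI := hn
  have hCn : C.Normal := him ▸ hn.map ψ hs
  refine ⟨hCn, ?_⟩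
  haveI := hCn
  have hle : A.subgroupOf B ≤ C.comap ψ := by
    intro x hx
    rw [Subgroup.mem_comap, ← him]
    exact Subgroup.mem_map_of_mem ψ hx
  let χ : (↥B ⧸ A.subgroupOf B) →* (H ⧸ C) := QuotientGroup.map _ _ ψ hle
  have hχ : Function.Surjective χ := by
    intro q
    obtain ⟨h, rfl⟩ := QuotientGroup.mk'_surjective C q
    obtain ⟨b, rfl⟩ := hs h
    exact ⟨QuotientGroup.mk b, rfl⟩
  rcases hq with hcyc | he
  · exact Or.inl (isCyclic_of_surjective χ hχ)
  obtain ⟨e⟩ := he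
  · have hfs : Function.Surjective (χ.comp e.symm.toMonoidHom) := hχ.comp e.symm.surjective
    rcases (MonoidHom.normal_ker (χ.comp e.symm.toMonoidHom)).eq_bot_or_eq_top with hker | hker
    · exact Or.inr ⟨(MulEquiv.ofBijective _
        ⟨(χ.comp e.symm.toMonoidHom).ker_eq_bot_iff.mp hker, hfs⟩).symm⟩
    · left
      have hone : ∀ q : H ⧸ C, q = 1 := by
        intro q
        obtain ⟨t, rfl⟩ := hfs q
        have ht : t ∈ (χ.comp e.symm.toMonoidHom).ker := hker ▸ Subgroup.mem_top t
        exact ht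
      haveI : Subsingleton (H ⧸ C) := ⟨fun a b => by rw [hone a, hone b]⟩
      infer_instance

lemma my_factor_map {T G G' : Type*} [Group T] [IsSimpleGroup T] [Group G] [Group G']
    {A B : Subgroup G} (hAB : A ≤ B) (f : G →* G')
    (hf : IsCyclicOrIsoTFactor T A B) :
    IsCyclicOrIsoTFactor T (A.map f) (B.map f) := by
  refine my_factor_transfer (f.subgroupMap B) (f.subgroupMap_surjective B) ?_ hf
  ext x
  simp only [Subgroup.mem_map, Subgroup.mem_subgroupOf]
  constructor
  · rintro ⟨a, ha, rfl⟩
    exact ⟨(a : G), ha, rfl⟩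
  · rintro ⟨a, haA, hfa⟩
    exact ⟨⟨a, hAB haA⟩, haA, Subtype.ext hfa⟩

lemma my_factor_restrict {T G : Type*} [Group T] [IsSimpleGroup T] [Group G]
    {A B K : Subgroup G} (hBK : B ≤ K)
    (hf : IsCyclicOrIsoTFactor T A B) :
    IsCyclicOrIsoTFactor T (A.subgroupOf K) (B.subgroupOf K) := by
  refine my_factor_transfer (Subgroup.subgroupOfEquivOfLe hBK).symm.toMonoidHom
    (Subgroup.subgroupOfEquivOfLe hBK).symm.surjective ?_ hf
  ext x
  simp only [Subgroup.mem_map, Subgroup.mem_subgroupOf]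
  constructor
  · rintro ⟨a, ha, rfl⟩
    simpa using ha
  · rintro hx
    exact ⟨⟨(x : ↥K), x.2⟩, hx, rfl⟩

lemma my_factor_top {T G : Type*} [Group T] [IsSimpleGroup T] [Group G]
    {K : Subgroup G} (hf : IsCyclicOrIsoTFactor T K ⊤) :
    ∃ _ : K.Normal, (IsCyclic (G ⧸ K) ∨ Nonempty ((G ⧸ K) ≃* T)) := by
  refine my_factor_transfer (⊤ : Subgroup G).subtype (fun g => ⟨⟨g, trivial⟩, rfl⟩) ?_ hf
  rw [Subgroup.subgroupOf_map_subtype, inf_top_eq]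

end Factor

section Series

lemma my_solvable_of_cyclic_series {G : Type*} [Group G] (n : ℕ) (H : Fin (n+1) → Subgroup G)
    (hmono : Monotone H) (hbot : H 0 = ⊥) (htop : H (Fin.last n) = ⊤)
    (hfac : ∀ i : Fin n, ∃ _ : ((H i.castSucc).subgroupOf (H i.succ)).Normal,
      IsCyclic (↥(H i.succ) ⧸ (H i.castSucc).subgroupOf (H i.succ))) :
    IsSolvable G := by
  have key : ∀ i : Fin (n+1), IsSolvable (H i) := by
    intro i
    induction i using Fin.induction with
    | zero =>
      rw [hbot]
      exact (inferInstance : Group.IsSolvable ↥(⊥ : Subgroup G))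
    | succ i ih =>
      obtain ⟨hn, hcyc⟩ := hfac i
      haveI := hn
      refine my_solvable_of_normal_of_quot ((H i.castSucc).subgroupOf (H i.succ)) ?_
        (my_isSolvable_of_cyclic hcyc)
      exact my_solvable_equiv
        (Subgroup.subgroupOfEquivOfLe (hmono (Fin.castSucc_lt_succ (i := i)).le)).symm ih
  have := key (Fin.last n)
  rw [htop] at this
  exact my_solvable_equiv Subgroup.topEquiv this

lemma my_tsolvable_map {T G G' : Type*} [Group T] [IsSimpleGroup T] [Group G] [Group G']
    (f : G →* G') (hf : Function.Surjective f) (h : IsTSolvable T G) : IsTSolvable T G' := by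
  obtain ⟨n, H, hmono, hbot, htop, hfac⟩ := h
  refine ⟨n, fun i => (H i).map f, fun i j hij => Subgroup.map_mono (hmono hij), ?_, ?_, ?_⟩
  · show (H 0).map f = ⊥
    rw [hbot, Subgroup.map_bot]
  · show (H (Fin.last n)).map f = ⊤
    rw [htop, ← MonoidHom.range_eq_map]
    exact MonoidHom.range_eq_top_of_surjective f hf
  · intro i
    exact my_factor_map (hmono (Fin.castSucc_lt_succ (i := i)).le) f (hfac i)

lemma my_tsolvable_cases {T G : Type*} [Group T] [Group G] (h : IsTSolvable T G) :
    IsSolvable G ∨ IsStrictlyTSolvable T G := by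
  obtain ⟨n, H, hmono, hbot, htop, hfac⟩ := h
  by_cases hiso : ∃ i : Fin n, IsIsoTFactor T (H i.castSucc) (H i.succ)
  · exact Or.inr ⟨n, H, hmono, hbot, htop, hfac, hiso⟩
  · left
    apply my_solvable_of_cyclic_series n H hmono hbot htop
    intro i
    obtain ⟨hn, hq⟩ := hfac i
    refine ⟨hn, ?_⟩
    rcases hq with h | h
    · exact h
    · exact absurd (⟨hn, h⟩ : IsIsoTFactor T (H i.castSucc) (H i.succ))
        (fun hh => hiso ⟨i, hh⟩)

lemma my_strict_not_solvable {T G : Type*} [Group T] [IsSimpleGroup T] [Group G]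
    (hnab : ∃ a b : T, a * b ≠ b * a)
    (h : IsStrictlyTSolvable T G) : ¬ IsSolvable G := by
  intro hs
  obtain ⟨n, H, hmono, hbot, htop, hfac, i, hn, he⟩ := h
  obtain ⟨e⟩ := he
  haveI : Group.IsSolvable G := hs; haveI := hn
  haveI : Group.IsSolvable ↥(H i.succ) := inferInstance
  haveI : Group.IsSolvable (↥(H i.succ) ⧸ (H i.castSucc).subgroupOf (H i.succ)) := inferInstance
  exact my_not_solvable_of_simple_nonabelian hnab
    (my_solvable_equiv e (inferInstance : Group.IsSolvable (↥(H i.succ) ⧸ (H i.castSucc).subgroupOf (H i.succ))))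

lemma my_strict_tsolvable (T G : Type*) [Group T] [Group G] (h : IsStrictlyTSolvable T G) :
    IsTSolvable T G := by
  obtain ⟨n, H, h1, h2, h3, h4, _⟩ := h
  exact ⟨n, H, h1, h2, h3, h4⟩

end Series

section Radical

lemma my_normal_solvable_sup {G : Type*} [Group G] {A B : Subgroup G}
    (hA : A.Normal) (hB : B.Normal) (hsA : IsSolvable A) (hsB : IsSolvable B) :
    (A ⊔ B).Normal ∧ IsSolvable ↥(A ⊔ B) := by
  haveI := hA; haveI := hB; haveI : Group.IsSolvable A := hsA; haveI : Group.IsSolvable B := hsB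
  refine ⟨Subgroup.sup_normal A B, ?_⟩
  haveI : (B.subgroupOf (A ⊔ B)).Normal := hB.subgroupOf _
  refine my_solvable_of_normal_of_quot (B.subgroupOf (A ⊔ B)) ?_ ?_
  · exact my_solvable_equiv (Subgroup.subgroupOfEquivOfLe le_sup_right).symm (inferInstance : Group.IsSolvable ↥B)
  · haveI : (B.subgroupOf A).Normal := hB.subgroupOf _
    haveI : Group.IsSolvable (↥A ⧸ B.subgroupOf A) := inferInstance
    exact my_solvable_equiv (QuotientGroup.quotientInfEquivProdNormalQuotient A B)
      (inferInstance : Group.IsSolvable (↥A ⧸ B.subgroupOf A))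

lemma my_exists_max_normal_solvable (G : Type*) [Group G] [Finite G] :
    ∃ R : Subgroup G, R.Normal ∧ IsSolvable ↥R ∧
      ∀ A : Subgroup G, A.Normal → IsSolvable ↥A → A ≤ R := by
  haveI : Finite (Subgroup G) :=
    Finite.of_injective (fun H => (H : Set G)) SetLike.coe_injective
  obtain ⟨R, hmem, hmax⟩ :=
    Set.Finite.exists_maximalFor id {A : Subgroup G | A.Normal ∧ IsSolvable ↥A}
      (Set.toFinite _) ⟨⊥, inferInstance, (inferInstance : Group.IsSolvable ↥(⊥ : Subgroup G))⟩
  obtain ⟨hRn, hRs⟩ := hmem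
  refine ⟨R, hRn, hRs, fun A hAn hAs => ?_⟩
  obtain ⟨hn, hs⟩ := my_normal_solvable_sup hAn hRn hAs hRs
  have heq : R = A ⊔ R := le_antisymm le_sup_right (hmax ⟨hn, hs⟩ le_sup_right)
  exact le_sup_left.trans heq.ge

lemma my_radical_trivial_of_normal {G : Type*} [Group G] [Finite G] {K : Subgroup G}
    (hK : K.Normal)
    (hrad : ∀ A : Subgroup G, A.Normal → IsSolvable ↥A → A = ⊥) :
    ∀ B : Subgroup ↥K, B.Normal → IsSolvable ↥B → B = ⊥ := by
  intro B hBn hBs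
  haveI := hK
  obtain ⟨R, hRn, hRs, hRmax⟩ := my_exists_max_normal_solvable ↥K
  have hBR : B ≤ R := hRmax B hBn hBs
  suffices h : R = ⊥ by rw [h] at hBR; exact le_bot_iff.mp hBR
  have hmapn : (R.map K.subtype).Normal := by
    constructor
    intro x hx g
    rw [Subgroup.mem_map] at hx
    obtain ⟨y, hy, rfl⟩ := hx
    have hconj : (MulAut.conjNormal g : MulAut ↥K) y ∈ R := by
      have hsub : R.map (MulAut.conjNormal g : MulAut ↥K).toMonoidHom ≤ R := by
        apply hRmax
        · exact hRn.map _ (MulAut.conjNormal g).surjective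
        · haveI := hRs
          exact my_solvable_equiv
            (Subgroup.equivMapOfInjective R _ (MulAut.conjNormal g).injective)
            hRs
      exact hsub (Subgroup.mem_map_of_mem _ hy)
    refine ⟨_, hconj, ?_⟩
    simp [MulAut.conjNormal_apply]
  have hmaps : IsSolvable ↥(R.map K.subtype) := by
    haveI := hRs
    exact my_solvable_equiv (Subgroup.equivMapOfInjective R _ K.subtype_injective)
      hRs
  have hbot := hrad _ hmapn hmaps
  ext y
  simp only [Subgroup.mem_bot]
  constructor
  · intro hy
    have : (y : G) ∈ R.map K.subtype := Subgroup.mem_map_of_mem _ hy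
    rw [hbot, Subgroup.mem_bot] at this
    exact Subtype.ext this
  · rintro rfl; exact R.one_mem
end Radical

section AuxMain

lemma my_aux (T : Type) [Group T] [Finite T] [IsSimpleGroup T]
    (r s : ℕ) (hr : r ∈ primeSet T) (hs : s ∈ primeSet T) (hrs : r ≠ s) :
    ∀ (n : ℕ) (G : Type) [Group G] [Finite G],
      ∀ (H : Fin (n+1) → Subgroup G), Monotone H → H 0 = ⊥ → H (Fin.last n) = ⊤ →
      (∀ i : Fin n, IsCyclicOrIsoTFactor T (H i.castSucc) (H i.succ)) →
      Nontrivial G →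
      (∀ A : Subgroup G, A.Normal → IsSolvable ↥A → A = ⊥) →
      (¬ hasElementOfOrder G (r * s)) →
      ∃ S : Subgroup G, S.Normal ∧ Nonempty (↥S ≃* T) ∧
        Subgroup.centralizer (S : Set G) = ⊥ := by
  intro n
  induction n with
  | zero =>
    intro G _ _ H hmono hbot htop hfac hnt hrad hedge
    exfalso
    have hbt : (⊥ : Subgroup G) = ⊤ := by
      have h0 : Fin.last 0 = (0 : Fin 1) := rfl
      rw [← hbot, ← htop, h0]
    obtain ⟨x, hx⟩ := exists_ne (1 : G)
    exact hx (Subgroup.mem_bot.mp (by rw [hbt]; exact Subgroup.mem_top x))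
  | succ n IH =>
    intro G _ _ H hmono hbot htop hfac hnt hrad hedge
    set K : Subgroup G := H (Fin.castSucc (Fin.last n)) with hKdef
    have htopfac : IsCyclicOrIsoTFactor T K ⊤ := by
      have := hfac (Fin.last n)
      rwa [Fin.succ_last, htop] at this
    by_cases hKtop : K = ⊤
    · -- drop the last (trivial) step
      apply IH G (fun i => H i.castSucc)
      · exact fun i j hij => hmono (Fin.castSucc_le_castSucc_iff.mpr hij)
      · show H (Fin.castSucc 0) = ⊥
        rw [Fin.castSucc_zero, hbot]
      · exact hKtop
      · intro i
        have h := hfac i.castSucc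
        show IsCyclicOrIsoTFactor T (H i.castSucc.castSucc) (H i.succ.castSucc)
        rwa [Fin.succ_castSucc] at h
      · exact hnt
      · exact hrad
      · exact hedge
    · obtain ⟨hKn, hq⟩ := my_factor_top htopfac
      haveI := hKn
      by_cases hKbot : K = ⊥
      · -- G itself is cyclic or isomorphic to T
        have hbij : Function.Bijective (QuotientGroup.mk' K) := by
          constructor
          · rw [← MonoidHom.ker_eq_bot_iff, QuotientGroup.ker_mk']
            exact hKbot
          · exact QuotientGroup.mk'_surjective K
        have eGQ : G ≃* G ⧸ K := MulEquiv.ofBijective _ hbij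
        rcases hq with hcyc | he
        · exfalso
          haveI := hcyc
          have hGc : IsCyclic G := isCyclic_of_surjective eGQ.symm eGQ.symm.surjective
          have hGs : IsSolvable G := my_isSolvable_of_cyclic hGc
          have htb : (⊤ : Subgroup G) = ⊥ :=
            hrad ⊤ inferInstance (my_solvable_equiv Subgroup.topEquiv.symm hGs)
          obtain ⟨x, hx⟩ := exists_ne (1 : G)
          exact hx (Subgroup.mem_bot.mp (by rw [← htb]; exact Subgroup.mem_top x))
        · obtain ⟨eQ⟩ := he
          have eG : G ≃* T := eGQ.trans eQ
          refine ⟨⊤, inferInstance, ⟨Subgroup.topEquiv.trans eG⟩, ?_⟩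
          rw [Subgroup.coe_top, Subgroup.centralizer_univ]
          exact hrad _ inferInstance
            (isSolvable_of_comm fun a b => Subtype.ext (Subgroup.mem_center_iff.mp a.2 b).symm)
      · -- main case: ⊥ < K < ⊤
        have hKle : ∀ i : Fin (n+1), H i.castSucc ≤ K :=
          fun i => hmono (Fin.castSucc_le_castSucc_iff.mpr (Fin.le_last i))
        have hradK := my_radical_trivial_of_normal hKn hrad
        obtain ⟨S₀, hS₀n, hS₀e, hS₀c⟩ := IH ↥K (fun i => (H i.castSucc).subgroupOf K)
          (fun i j hij => Subgroup.comap_mono (hmono (Fin.castSucc_le_castSucc_iff.mpr hij)))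
          (by show (H (Fin.castSucc 0)).subgroupOf K = ⊥
              rw [Fin.castSucc_zero, hbot, Subgroup.bot_subgroupOf])
          (by show (H (Fin.castSucc (Fin.last n))).subgroupOf K = ⊤
              rw [← hKdef, Subgroup.subgroupOf_self])
          (by intro i
              have h := my_factor_restrict (K := K)
                (by rw [Fin.succ_castSucc]; exact hKle i.succ) (hfac i.castSucc)
              show IsCyclicOrIsoTFactor T ((H i.castSucc.castSucc).subgroupOf K)
                ((H i.succ.castSucc).subgroupOf K)
              rwa [Fin.succ_castSucc] at h)
          ((Subgroup.nontrivial_iff_ne_bot K).mpr hKbot)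
          hradK
          (fun hh => hedge (my_hasElementOfOrder_subgroup K hh))
        obtain ⟨e₀⟩ := hS₀e
        haveI hS₀nt : Nontrivial ↥S₀ := e₀.toEquiv.nontrivial
        set S : Subgroup G := S₀.map K.subtype with hSdef
        have eS : ↥S ≃* T :=
          (Subgroup.equivMapOfInjective S₀ K.subtype K.subtype_injective).symm.trans e₀
        -- dichotomy for normal subgroups of K against S₀
        have key : ∀ V : Subgroup ↥K, V.Normal → V ⊓ S₀ = S₀ ∨ V ⊓ S₀ = ⊥ := by
          intro V hVn
          have hWn : ((V ⊓ S₀).subgroupOf S₀).Normal := by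
            constructor
            intro w hw g
            rw [Subgroup.mem_subgroupOf] at hw ⊢
            rw [Subgroup.mem_inf] at hw ⊢
            constructor
            · have := hVn.conj_mem _ hw.1 (g : ↥K)
              simpa using this
            · exact S₀.mul_mem (S₀.mul_mem g.2 hw.2) (S₀.inv_mem g.2)
          rcases (hWn.map e₀.toMonoidHom e₀.surjective).eq_bot_or_eq_top with hb | ht
          · right
            ext x
            simp only [Subgroup.mem_inf, Subgroup.mem_bot]
            constructor
            · rintro ⟨hxV, hxS⟩
              have hw : (⟨x, hxS⟩ : ↥S₀) ∈ (V ⊓ S₀).subgroupOf S₀ := by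
                rw [Subgroup.mem_subgroupOf]
                exact Subgroup.mem_inf.mpr ⟨hxV, hxS⟩
              have : e₀ ⟨x, hxS⟩ ∈ ((V ⊓ S₀).subgroupOf S₀).map e₀.toMonoidHom :=
                Subgroup.mem_map_of_mem _ hw
              rw [hb, Subgroup.mem_bot] at this
              have h1 : (⟨x, hxS⟩ : ↥S₀) = 1 := e₀.injective (by simpa using this)
              exact congrArg Subtype.val h1
            · rintro rfl
              exact ⟨V.one_mem, S₀.one_mem⟩
          · left
            have hle : S₀ ≤ V ⊓ S₀ := by
              intro y hy
              have hmem : e₀ ⟨y, hy⟩ ∈ ((V ⊓ S₀).subgroupOf S₀).map e₀.toMonoidHom := by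
                rw [ht]
                exact Subgroup.mem_top _
              obtain ⟨z, hz, hze⟩ := hmem
              have hzy : z = ⟨y, hy⟩ := e₀.injective hze
              have hz' : (⟨y, hy⟩ : ↥S₀) ∈ (V ⊓ S₀).subgroupOf S₀ := hzy ▸ hz
              exact Subgroup.mem_subgroupOf.mp hz'
            exact le_antisymm inf_le_right hle
        have hnormal : S.Normal := by
          constructor
          intro x hx g
          rw [Subgroup.mem_map] at hx
          obtain ⟨y, hy, rfl⟩ := hx
          have hVn : (S₀.map (MulAut.conjNormal g : MulAut ↥K).toMonoidHom).Normal :=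
            hS₀n.map _ (MulAut.conjNormal g).surjective
          have hVnt : Nontrivial ↥(S₀.map (MulAut.conjNormal g : MulAut ↥K).toMonoidHom) :=
            (Subgroup.equivMapOfInjective S₀ _
              (MulAut.conjNormal g).injective).symm.toEquiv.nontrivial
          have hVS : S₀.map (MulAut.conjNormal g : MulAut ↥K).toMonoidHom = S₀ := by
            rcases key _ hVn with h | h
            · have hle : S₀ ≤ S₀.map (MulAut.conjNormal g : MulAut ↥K).toMonoidHom :=
                (le_of_eq h.symm).trans inf_le_left
              have hcard := Nat.card_congr (Subgroup.equivMapOfInjective S₀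
                (MulAut.conjNormal g : MulAut ↥K).toMonoidHom
                (MulAut.conjNormal g).injective).toEquiv
              exact (Subgroup.eq_of_le_of_card_ge hle hcard.ge).symm
            · exfalso
              have hVc : S₀.map (MulAut.conjNormal g : MulAut ↥K).toMonoidHom ≤
                  Subgroup.centralizer (S₀ : Set ↥K) := by
                intro v hv
                rw [Subgroup.mem_centralizer_iff]
                intro x hx
                have hcomm : x * v * x⁻¹ * v⁻¹ ∈
                    S₀.map (MulAut.conjNormal g : MulAut ↥K).toMonoidHom ⊓ S₀ := by
                  rw [Subgroup.mem_inf]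
                  constructor
                  · exact Subgroup.mul_mem _ (hVn.conj_mem v hv x) (Subgroup.inv_mem _ hv)
                  · have h1 : v * x⁻¹ * v⁻¹ ∈ S₀ := hS₀n.conj_mem _ (S₀.inv_mem hx) v
                    have h2 := S₀.mul_mem hx h1
                    simpa [mul_assoc] using h2
                rw [h, Subgroup.mem_bot] at hcomm
                rw [mul_inv_eq_one] at hcomm
                calc x * v = (x * v * x⁻¹) * x := by group
                _ = v * x := by rw [hcomm]
              rw [hS₀c] at hVc
              have hVbot := le_bot_iff.mp hVc
              rw [hVbot] at hVnt
              obtain ⟨a, b, hab⟩ := hVnt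
              exact hab (Subsingleton.elim a b)
          refine ⟨(MulAut.conjNormal g : MulAut ↥K) y, ?_, ?_⟩
          · rw [← hVS]
            exact Subgroup.mem_map_of_mem _ hy
          · simp [MulAut.conjNormal_apply]
        -- the centralizer of S in G is trivial
        have hcent : Subgroup.centralizer (S : Set G) = ⊥ := by
          have hCn : (Subgroup.centralizer (S : Set G)).Normal := by
            constructor
            intro c hc g
            rw [Subgroup.mem_centralizer_iff] at hc ⊢
            intro x hxS
            have hx' : g⁻¹ * x * g ∈ (S : Set G) := by
              have := hnormal.conj_mem x hxS g⁻¹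
              simpa using this
            have h1 := hc _ hx'
            calc x * (g * c * g⁻¹) = g * ((g⁻¹ * x * g) * c) * g⁻¹ := by group
            _ = g * (c * (g⁻¹ * x * g)) * g⁻¹ := by rw [h1]
            _ = (g * c * g⁻¹) * x := by group
          have hCKbot : ∀ c : G, c ∈ Subgroup.centralizer (S : Set G) → c ∈ K → c = 1 := by
            intro c hcC hcK
            have hmem : (⟨c, hcK⟩ : ↥K) ∈ Subgroup.centralizer (S₀ : Set ↥K) := by
              rw [Subgroup.mem_centralizer_iff]
              intro y hy
              have hyS : (y : G) ∈ (S : Set G) := Subgroup.mem_map_of_mem _ hy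
              have := Subgroup.mem_centralizer_iff.mp hcC _ hyS
              exact Subtype.ext this
            rw [hS₀c, Subgroup.mem_bot] at hmem
            exact congrArg Subtype.val hmem
          set f : ↥(Subgroup.centralizer (S : Set G)) →* G ⧸ K :=
            (QuotientGroup.mk' K).comp (Subgroup.centralizer (S : Set G)).subtype with hfdef
          have hfinj : Function.Injective f := by
            rw [← MonoidHom.ker_eq_bot_iff]
            ext c
            simp only [MonoidHom.mem_ker, Subgroup.mem_bot, hfdef, MonoidHom.comp_apply]
            constructor
            · intro hc
              have hcK : (c : G) ∈ K := (QuotientGroup.eq_one_iff _).mp hc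
              exact Subtype.ext (hCKbot _ c.2 hcK)
            · rintro rfl
              simp
          rcases hq with hcyc | he
          · haveI := hcyc
            have hCc : IsCyclic ↥(Subgroup.centralizer (S : Set G)) := by
              have e := MonoidHom.ofInjective hfinj
              haveI : IsCyclic ↥f.range := Subgroup.isCyclic _
              exact isCyclic_of_surjective e.symm e.symm.surjective
            exact hrad _ hCn (my_isSolvable_of_cyclic hCc)
          · obtain ⟨eQ⟩ := he
            have hmapn : ((Subgroup.centralizer (S : Set G)).map (QuotientGroup.mk' K)).Normal :=
              hCn.map _ (QuotientGroup.mk'_surjective K)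
            rcases (hmapn.map eQ.toMonoidHom eQ.surjective).eq_bot_or_eq_top with hb | ht2
            · have hmapbot : (Subgroup.centralizer (S : Set G)).map (QuotientGroup.mk' K) = ⊥ := by
                apply Subgroup.map_injective (f := eQ.toMonoidHom) eQ.injective
                rw [hb, Subgroup.map_bot]
              have hCle : Subgroup.centralizer (S : Set G) ≤ K := by
                intro c hc
                have hm : QuotientGroup.mk' K c ∈
                    (Subgroup.centralizer (S : Set G)).map (QuotientGroup.mk' K) :=
                  Subgroup.mem_map_of_mem _ hc
                rw [hmapbot, Subgroup.mem_bot] at hm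
                exact (QuotientGroup.eq_one_iff c).mp hm
              ext c
              simp only [Subgroup.mem_bot]
              constructor
              · intro hc
                exact hCKbot c hc (hCle hc)
              · rintro rfl
                exact Subgroup.one_mem _
            · exfalso
              have h3 : (Subgroup.centralizer (S : Set G)).map (QuotientGroup.mk' K) = ⊤ := by
                have := congrArg (Subgroup.comap eQ.toMonoidHom) ht2
                rwa [Subgroup.comap_map_eq_self_of_injective eQ.injective,
                  Subgroup.comap_top] at this
              have hrange : f.range = ⊤ := by
                rw [hfdef, MonoidHom.range_comp, Subgroup.range_subtype, h3]
              have eC : ↥(Subgroup.centralizer (S : Set G)) ≃* T :=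
                (MulEquiv.ofBijective f ⟨hfinj, MonoidHom.range_eq_top.mp hrange⟩).trans eQ
              obtain ⟨hrp, hrd⟩ := hr
              obtain ⟨hsp, hsd⟩ := hs
              haveI : Fact r.Prime := ⟨hrp⟩
              haveI : Fact s.Prime := ⟨hsp⟩
              have hcardC : Nat.card ↥(Subgroup.centralizer (S : Set G)) = Nat.card T :=
                Nat.card_congr eC.toEquiv
              have hcardS : Nat.card ↥S = Nat.card T := Nat.card_congr eS.toEquiv
              obtain ⟨c, hc⟩ := exists_prime_orderOf_dvd_card'
                (G := ↥(Subgroup.centralizer (S : Set G))) r (by rw [hcardC]; exact hrd)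
              obtain ⟨x, hx⟩ := exists_prime_orderOf_dvd_card' (G := ↥S) s
                (by rw [hcardS]; exact hsd)
              have hcomm : Commute (c : G) (x : G) :=
                (Subgroup.mem_centralizer_iff.mp c.2 _ x.2).symm
              have hordc : orderOf (c : G) = r := by
                rw [← hc]
                exact orderOf_injective _ (Subgroup.subtype_injective _) c
              have hordx : orderOf (x : G) = s := by
                rw [← hx]
                exact orderOf_injective _ (Subgroup.subtype_injective _) x
              apply hedge
              refine ⟨(c : G) * (x : G), ?_⟩
              rw [hcomm.orderOf_mul_eq_mul_orderOf_of_coprime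
                (by rw [hordc, hordx]; exact (Nat.coprime_primes hrp hsp).mpr hrs),
                hordc, hordx]
        exact ⟨S, hnormal, ⟨eS⟩, hcent⟩

end AuxMain

section FinalMain

lemma my_main (T : Type) [Group T] [Finite T] [IsSimpleGroup T]
    (hnab : ∃ a b : T, a * b ≠ b * a)
    (r s : ℕ) (hr : r ∈ primeSet T) (hs : s ∈ primeSet T) (hrs : r ≠ s) :
    ∀ (c : ℕ) (G : Type) [Group G] [Finite G], Nat.card G ≤ c →
      IsStrictlyTSolvable T G → (¬ hasElementOfOrder G (r * s)) →
      ∃ (N : Subgroup G) (M : Subgroup (MulAut T)) (φ : G →* ↥M),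
        N.Normal ∧ IsSolvable ↥N ∧ (MulAut.conj : T →* MulAut T).range ≤ M ∧
        Function.Surjective φ ∧ φ.ker = N := by
  intro c
  induction c with
  | zero =>
    intro G _ _ hcard _ _
    exact absurd hcard (by have := Nat.card_pos (α := G); omega)
  | succ c IH =>
    intro G _ _ hcard hG hedge
    by_cases hrad : ∀ A : Subgroup G, A.Normal → IsSolvable ↥A → A = ⊥
    · -- trivial solvable radical : use the structure result
      have hns : ¬ IsSolvable G := my_strict_not_solvable hnab hG
      haveI hnt : Nontrivial G := by
        by_contra h
        rw [not_nontrivial_iff_subsingleton] at h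
        exact hns (inferInstance : Group.IsSolvable G)
      obtain ⟨n, H, h1, h2, h3, h4, _⟩ := hG
      obtain ⟨S, hSn, hSe, hScent⟩ := my_aux T r s hr hs hrs n G H h1 h2 h3 h4 hnt hrad hedge
      obtain ⟨eS⟩ := hSe
      haveI := hSn
      let ρ : MulAut ↥S →* MulAut T :=
        { toFun := fun a => (eS.symm.trans a).trans eS
          map_one' := by ext t; simp
          map_mul' := by intro a b; ext t; simp }
      let φ0 : G →* MulAut T := ρ.comp MulAut.conjNormal
      have hker : φ0.ker = ⊥ := by
        ext g
        simp only [MonoidHom.mem_ker, Subgroup.mem_bot]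
        constructor
        · intro hg
          have hfix : ∀ y : ↥S, (MulAut.conjNormal g : MulAut ↥S) y = y := by
            intro y
            have h1' : φ0 g (eS y) = eS y := by rw [hg]; rfl
            have h2' : eS ((MulAut.conjNormal g : MulAut ↥S) y) = eS y := by
              simpa [φ0, ρ] using h1'
            exact eS.injective h2'
          have hmem : g ∈ Subgroup.centralizer (S : Set G) := by
            rw [Subgroup.mem_centralizer_iff]
            intro x hx
            have h3' := hfix ⟨x, hx⟩
            have h4' : g * x * g⁻¹ = x := by
              have := congrArg Subtype.val h3'
              simpa [MulAut.conjNormal_apply] using this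
            calc x * g = (g * x * g⁻¹) * g := by rw [h4']
            _ = g * x := by group
          rwa [hScent, Subgroup.mem_bot] at hmem
        · rintro rfl
          simp
      have hinn : (MulAut.conj : T →* MulAut T).range ≤ φ0.range := by
        rintro _ ⟨t, rfl⟩
        refine ⟨((eS.symm t : ↥S) : G), ?_⟩
        have hcn : (MulAut.conjNormal ((eS.symm t : ↥S) : G) : MulAut ↥S) =
            MulAut.conj (eS.symm t) := MulAut.conjNormal_val
        ext u
        show ((eS.symm.trans (MulAut.conjNormal ((eS.symm t : ↥S) : G) : MulAut ↥S)).trans eS) u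
          = MulAut.conj t u
        rw [hcn]
        simp [MulAut.conj_apply]
      refine ⟨⊥, φ0.range, φ0.rangeRestrict, inferInstance, (inferInstance : Group.IsSolvable ↥(⊥ : Subgroup G)), hinn,
        φ0.rangeRestrict_surjective, ?_⟩
      rw [MonoidHom.ker_rangeRestrict, hker]
    · push_neg at hrad
      obtain ⟨A, hAn, hAs, hAne⟩ := hrad
      haveI := hAn
      have hQcard : Nat.card (G ⧸ A) ≤ c := by
        have h1 := Subgroup.card_eq_card_quotient_mul_card_subgroup A
        have h2 : 1 < Nat.card A := (Subgroup.one_lt_card_iff_ne_bot A).mpr hAne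
        have h3 : 0 < Nat.card (G ⧸ A) := Nat.card_pos
        have h4 : Nat.card (G ⧸ A) < Nat.card G := by
          rw [h1]
          exact lt_mul_of_one_lt_right h3 h2
        omega
      have hQstrict : IsStrictlyTSolvable T (G ⧸ A) := by
        have hts := my_tsolvable_map (QuotientGroup.mk' A) (QuotientGroup.mk'_surjective A)
          (my_strict_tsolvable T G hG)
        rcases my_tsolvable_cases hts with hsol | hstrict
        · exact absurd (my_solvable_of_normal_of_quot A hAs hsol)
            (my_strict_not_solvable hnab hG)
        · exact hstrict
      have hQedge : ¬ hasElementOfOrder (G ⧸ A) (r * s) := fun hh =>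
        hedge (my_hasElementOfOrder_lift (QuotientGroup.mk' A)
          (QuotientGroup.mk'_surjective A) hh)
      obtain ⟨N', M, φ', hN'n, hN's, hM, hφ's, hφ'k⟩ := IH (G ⧸ A) hQcard hQstrict hQedge
      refine ⟨N'.comap (QuotientGroup.mk' A), M, φ'.comp (QuotientGroup.mk' A), ?_, ?_, hM,
        hφ's.comp (QuotientGroup.mk'_surjective A), ?_⟩
      · exact hN'n.comap _
      · -- solvability of the preimage
        set N : Subgroup G := N'.comap (QuotientGroup.mk' A) with hN
        have hAleN : A ≤ N := by
          intro a ha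
          rw [hN, Subgroup.mem_comap]
          have h5 : QuotientGroup.mk' A a = 1 := (QuotientGroup.eq_one_iff a).mpr ha
          rw [h5]
          exact N'.one_mem
        haveI : (A.subgroupOf N).Normal := hAn.subgroupOf N
        refine my_solvable_of_normal_of_quot (A.subgroupOf N)
          (my_solvable_equiv (Subgroup.subgroupOfEquivOfLe hAleN).symm hAs) ?_
        set ψ : ↥N →* ↥(N.map (QuotientGroup.mk' A)) := (QuotientGroup.mk' A).subgroupMap N
          with hψ
        have hψs := (QuotientGroup.mk' A).subgroupMap_surjective N
        have hkerψ : ψ.ker = A.subgroupOf N := by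
          ext x
          simp only [MonoidHom.mem_ker, Subgroup.mem_subgroupOf]
          constructor
          · intro hx
            have h6 : QuotientGroup.mk' A (x : G) = 1 := congrArg Subtype.val hx
            exact (QuotientGroup.eq_one_iff _).mp h6
          · intro hx
            exact Subtype.ext ((QuotientGroup.eq_one_iff _).mpr hx)
        have e2 : (↥N ⧸ A.subgroupOf N) ≃* ↥(N.map (QuotientGroup.mk' A)) :=
          (QuotientGroup.quotientMulEquivOfEq hkerψ.symm).trans
            (QuotientGroup.quotientKerEquivOfSurjective ψ hψs)
        have hmap : N.map (QuotientGroup.mk' A) = N' :=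
          Subgroup.map_comap_eq_self_of_surjective (QuotientGroup.mk'_surjective A) N'
        have h7 : IsSolvable ↥(N.map (QuotientGroup.mk' A)) := by rw [hmap]; exact hN's
        exact my_solvable_equiv e2.symm h7
      · ext x
        simp only [MonoidHom.mem_ker, MonoidHom.comp_apply, Subgroup.mem_comap, ← hφ'k]

end FinalMain
/-- If `G` is strictly `T`-solvable and some edge between two primes of `π(T)`
lies in `Γ̄(G)`, then `G ≅ N.M` with `N` solvable normal and `Inn(T) ≤ M ≤ Aut(T)`. -/
theorem statement4 (T : Type) [Group T] [Finite T] [IsSimpleGroup T]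
    (hnab : ∃ a b : T, a * b ≠ b * a)
    (G : Type) [Group G] [Finite G] (hG : IsStrictlyTSolvable T G)
    (r s : ℕ) (hr : r ∈ primeSet T) (hs : s ∈ primeSet T) (hrs : r ≠ s)
    (hedge : ¬ hasElementOfOrder G (r * s)) :
    ∃ (N : Subgroup G) (M : Subgroup (MulAut T)) (φ : G →* ↥M),
      N.Normal ∧ IsSolvable ↥N ∧ (MulAut.conj : T →* MulAut T).range ≤ M ∧
      Function.Surjective φ ∧ φ.ker = N := by
  exact my_main T hnab r s hr hs hrs (Nat.card G) G le_rfl hG hedge
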